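/- arXiv:2302.00959 — 3 statements merged into one kernel-verified Lean document; each statement's English description precedes it below -/
import Mathlib

section
/- Let a, b, c be nonnegative integers and let M be the a×a matrix over ℚ with entries M_{i,j} := C(b+c, b+i−j) for i,j ∈ {1,…,a}. Then M is invertible and the (i,j)-entry of M^{−1} is (−1)^{i+j} · (b+j−1)! · (c+i−1)! · ∑_{k=max(i,j)}^{a} C(k−1, i−1) · C(k−1, j−1) · (b)_{k−i} · (c)_{k−j} / ( (k−1)!·(b+c+k−1)! ). -/
open Finset

noncomputable section

/-- Binomial coefficient with integer arguments, equal to `0` whenever `k < 0` or `k > n`. -/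
def ibinom (n k : ℤ) : ℚ :=
  if 0 ≤ k ∧ k ≤ n then (n.toNat.choose k.toNat : ℚ) else 0

/-- The Pochhammer symbol (rising factorial) `x (x+1) ⋯ (x+n-1)`. -/
def poch (x : ℚ) (n : ℕ) : ℚ := (ascPochhammer ℚ n).eval x

/-- MacMahon's product `M(a,b,c)`. -/
def macmahon (a b c : ℕ) : ℚ :=
  ∏ i ∈ Finset.range a,
    ((Nat.factorial i : ℚ) * (Nat.factorial (b + c + i) : ℚ)) /
      ((Nat.factorial (b + i) : ℚ) * (Nat.factorial (c + i) : ℚ))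

/-- The matrix `Q(a,b,c,d,p)` (with `1`-based indices `i, j ∈ {1, …, a+d}`):
rows/columns with index `≤ a` are lateral, the rest are intrusive. -/
def Qmat (a b c d : ℕ) (p : ℤ) : Matrix (Fin (a + d)) (Fin (a + d)) ℚ :=
  Matrix.of fun i j =>
    if (i : ℕ) < a then
      if (j : ℕ) < a then
        ibinom ((b : ℤ) + c) ((c : ℤ) - (((i : ℕ) : ℤ) + 1) + (((j : ℕ) : ℤ) + 1))
      else
        ibinom (2 * (((j : ℕ) : ℤ) - a + 1) - 1)
          ((((j : ℕ) : ℤ) - a + 1) - (((i : ℕ) : ℤ) + 1) + p)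
    else
      if (j : ℕ) < a then
        ibinom ((b : ℤ) + c - 2 * (((i : ℕ) : ℤ) - a + 1) + 1)
          ((c : ℤ) - (((i : ℕ) : ℤ) - a + 1) + (((j : ℕ) : ℤ) + 1) - p)
      else
        ibinom (2 * (((j : ℕ) : ℤ) - ((i : ℕ) : ℤ))) (((j : ℕ) : ℤ) - ((i : ℕ) : ℤ))

/-- `E(a,b,c,d,p) = det Q(a,b,c,d,p)`, the signed count of lozenge tilings of the
`(a,b,c)`-hexagon with an even intrusion of length `d` at position `p`. -/
def E (a b c d : ℕ) (p : ℤ) : ℚ := (Qmat a b c d p).det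

namespace MacAux

lemma poch_zero (x : ℚ) : poch x 0 = 1 := by simp [poch]

lemma poch_succ (x : ℚ) (n : ℕ) : poch x (n+1) = poch x n * (x + n) := by
  simp [poch, ascPochhammer_succ_right]

lemma poch_zero_arg {n : ℕ} (h : n ≠ 0) : poch 0 n = 0 := by
  simp [poch, ascPochhammer_eval_zero, h]

lemma poch_neg_nat (b : ℕ) (m : ℕ) :
    poch (-(b:ℚ)) m = (-1)^m * (m.factorial : ℚ) * (b.choose m : ℚ) := by
  induction m with
  | zero => simp [poch_zero]
  | succ m ih =>
    rw [poch_succ, ih]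
    rcases le_or_gt (m+1) b with h | h
    · have h2 : (m:ℕ) ≤ b := by omega
      have := Nat.choose_succ_right_eq b m
      have hcast := congrArg (Nat.cast : ℕ → ℚ) this
      push_cast [Nat.cast_sub h2] at hcast
      rw [Nat.factorial_succ, pow_succ]
      push_cast
      linear_combination ((-1:ℚ)^m * (m.factorial:ℚ)) * hcast
    · have h1 : b.choose (m+1) = 0 := Nat.choose_eq_zero_of_lt h
      rcases Nat.lt_or_ge b m with h2 | h2
      · rw [Nat.choose_eq_zero_of_lt h2, h1]; ring
      · have hbm : b = m := by omega
        subst hbm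
        simp [h1]

lemma poch_vandermonde (x y : ℚ) (d : ℕ) :
    poch (x + y) d = ∑ m ∈ range (d+1), (d.choose m : ℚ) * poch x m * poch y (d - m) := by
  induction d with
  | zero => simp [poch_zero]
  | succ d ih =>
    rw [poch_succ, ih, Finset.sum_mul]
    have hsplit : ∀ m ∈ range (d+1),
        (d.choose m : ℚ) * poch x m * poch y (d - m) * (x + y + d)
          = (d.choose m : ℚ) * poch x (m+1) * poch y (d - m)
            + (d.choose m : ℚ) * poch x m * poch y ((d - m) + 1) := by
      intro m hm
      have hm' : m ≤ d := by simpa using Nat.lt_succ_iff.mp (Finset.mem_range.mp hm)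
      rw [poch_succ, poch_succ, Nat.cast_sub hm']
      push_cast
      ring
    rw [Finset.sum_congr rfl hsplit, Finset.sum_add_distrib]
    rw [Finset.sum_range_succ' (fun m => ((d+1).choose m : ℚ) * poch x m * poch y (d + 1 - m))]
    have hRB : ∀ m ∈ range (d+1),
        ((d+1).choose (m+1) : ℚ) * poch x (m+1) * poch y (d + 1 - (m+1))
          = (d.choose m : ℚ) * poch x (m+1) * poch y (d - m)
            + (d.choose (m+1) : ℚ) * poch x (m+1) * poch y (d - m) := by
      intro m hm
      rw [Nat.choose_succ_succ' d m, Nat.succ_sub_succ]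
      push_cast
      ring
    rw [Finset.sum_congr rfl hRB, Finset.sum_add_distrib]
    have hC : ∑ m ∈ range (d+1), (d.choose m : ℚ) * poch x m * poch y ((d - m) + 1)
        = (∑ m ∈ range (d+1), (d.choose (m+1) : ℚ) * poch x (m+1) * poch y (d - m))
          + poch y (d+1) := by
      rw [Finset.sum_range_succ' (fun m => (d.choose m : ℚ) * poch x m * poch y ((d - m) + 1))]
      rw [Finset.sum_range_succ (fun m => (d.choose (m+1) : ℚ) * poch x (m+1) * poch y (d - m))]
      rw [Nat.choose_succ_self]
      simp only [Nat.cast_zero, zero_mul, add_zero, Nat.choose_zero_right, Nat.cast_one, one_mul,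
        Nat.sub_zero, poch_zero]
      congr 1
      apply Finset.sum_congr rfl
      intro m hm
      have hm' : m < d := Finset.mem_range.mp hm
      have h2 : d - (m+1) + 1 = d - m := by omega
      rw [h2]
    rw [hC]
    simp only [Nat.choose_zero_right, Nat.cast_one, one_mul, poch_zero, Nat.sub_zero]
    ring

lemma key1 (b d : ℕ) :
    ∑ m ∈ range (d+1), (-1:ℚ)^m * (b.choose m : ℚ) * poch (b:ℚ) (d - m) / ((d-m).factorial : ℚ)
      = if d = 0 then 1 else 0 := by
  rcases Nat.eq_zero_or_pos d with hd | hd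
  · subst hd; simp [poch_zero]
  · have hV := poch_vandermonde (-(b:ℚ)) (b:ℚ) d
    rw [neg_add_cancel, poch_zero_arg (by omega)] at hV
    have hterm : ∀ m ∈ range (d+1),
        (d.choose m : ℚ) * poch (-(b:ℚ)) m * poch (b:ℚ) (d - m)
          = (d.factorial : ℚ) *
            ((-1:ℚ)^m * (b.choose m : ℚ) * poch (b:ℚ) (d - m) / ((d-m).factorial : ℚ)) := by
      intro m hm
      have hm' : m ≤ d := by simpa [Nat.lt_succ_iff] using Finset.mem_range.mp hm
      rw [poch_neg_nat, Nat.cast_choose ℚ hm']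
      have h1 : ((d-m).factorial : ℚ) ≠ 0 := by exact_mod_cast (Nat.factorial_pos _).ne'
      have h2 : (m.factorial : ℚ) ≠ 0 := by exact_mod_cast (Nat.factorial_pos _).ne'
      field_simp
    rw [Finset.sum_congr rfl hterm, ← Finset.mul_sum] at hV
    have hd0 : (d.factorial : ℚ) ≠ 0 := by exact_mod_cast (Nat.factorial_pos _).ne'
    rw [if_neg (by omega)]
    exact (mul_eq_zero.mp hV.symm).resolve_left hd0

lemma key2 (c d : ℕ) :
    ∑ m ∈ range (d+1), (-1:ℚ)^m * poch (c:ℚ) m * (c.choose (d-m) : ℚ) / (m.factorial : ℚ)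
      = if d = 0 then 1 else 0 := by
  rcases Nat.eq_zero_or_pos d with hd | hd
  · subst hd; simp [poch_zero]
  · have hV := poch_vandermonde (c:ℚ) (-(c:ℚ)) d
    rw [add_neg_cancel, poch_zero_arg (by omega)] at hV
    have hterm : ∀ m ∈ range (d+1),
        (d.choose m : ℚ) * poch (c:ℚ) m * poch (-(c:ℚ)) (d - m)
          = ((-1:ℚ)^d * (d.factorial : ℚ)) *
            ((-1:ℚ)^m * poch (c:ℚ) m * (c.choose (d-m) : ℚ) / (m.factorial : ℚ)) := by
      intro m hm
      have hm' : m ≤ d := by simpa [Nat.lt_succ_iff] using Finset.mem_range.mp hm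
      rw [poch_neg_nat, Nat.cast_choose ℚ hm']
      have h1 : ((d-m).factorial : ℚ) ≠ 0 := by exact_mod_cast (Nat.factorial_pos _).ne'
      have h2 : (m.factorial : ℚ) ≠ 0 := by exact_mod_cast (Nat.factorial_pos _).ne'
      have hsgn : (-1:ℚ)^(d-m) * (-1:ℚ)^m = (-1:ℚ)^d := by
        rw [← pow_add]; congr 1; omega
      have hsq : (-1:ℚ)^m * (-1:ℚ)^m = 1 := by rw [← mul_pow]; norm_num
      have hrw : (-1:ℚ)^(d-m) = (-1:ℚ)^d * (-1:ℚ)^m := by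
        calc (-1:ℚ)^(d-m) = (-1:ℚ)^(d-m) * ((-1:ℚ)^m * (-1:ℚ)^m) := by rw [hsq, mul_one]
        _ = (-1:ℚ)^d * (-1:ℚ)^m := by rw [← mul_assoc, hsgn]
      rw [hrw]
      field_simp
    rw [Finset.sum_congr rfl hterm, ← Finset.mul_sum] at hV
    have hd0 : ((-1:ℚ)^d * (d.factorial : ℚ)) ≠ 0 := by
      apply mul_ne_zero
      · exact pow_ne_zero _ (by norm_num)
      · exact_mod_cast (Nat.factorial_pos _).ne'
    rw [if_neg (by omega)]
    exact (mul_eq_zero.mp hV.symm).resolve_left hd0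

/-- Guarded binomial coefficient: `C(x, y-k)` for `k ≤ y`, else `0`. -/
def G (x y k : ℕ) : ℕ := if k ≤ y then x.choose (y - k) else 0

lemma G_succ_succ (x y k : ℕ) : G x (y+1) (k+1) = G x y k := by
  unfold G
  by_cases h : k ≤ y
  · rw [if_pos (by omega), if_pos h, Nat.succ_sub_succ]
  · rw [if_neg (by omega), if_neg h]

lemma G_pascal (x y k : ℕ) : G (x+1) (y+1) k = G x (y+1) k + G x y k := by
  unfold G
  rcases Nat.lt_trichotomy k (y+1) with h | h | h
  · have hky : k ≤ y := by omega
    rw [if_pos (by omega), if_pos (by omega), if_pos hky]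
    have h1 : y + 1 - k = (y - k) + 1 := by omega
    rw [h1, Nat.choose_succ_succ']
    omega
  · subst h
    rw [if_pos le_rfl, if_pos le_rfl, if_neg (by omega)]
    simp
  · rw [if_neg (by omega), if_neg (by omega), if_neg (by omega)]

lemma G_zero_right (x y : ℕ) : G x y 0 = x.choose y := by simp [G]

lemma G_zero_left (y k : ℕ) : G 0 y k = if k = y then 1 else 0 := by
  unfold G
  rcases Nat.lt_trichotomy k y with h | h | h
  · rw [if_pos h.le, if_neg (by omega)]
    have : y - k ≠ 0 := by omega
    cases hyk : y - k with
    | zero => omega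
    | succ n => simp
  · subst h; simp
  · rw [if_neg (by omega), if_neg (by omega)]

/-- LHS of Surányi's identity. -/
def Ssum (b c i j : ℕ) : ℕ :=
  ∑ k ∈ range (i+1), (b+c+k).choose k * G c i k * G b j k

lemma subset_subset (c i j : ℕ) (h : j ≤ i) :
    (c+j).choose j * c.choose (i-j) = i.choose j * (c+j).choose i := by
  rcases le_or_gt i (c+j) with hic | hic
  · have h1 : i - j ≤ c := by omega
    have hq : (((c+j).choose j : ℚ) * (c.choose (i-j) : ℚ)) =
        ((i.choose j : ℚ) * ((c+j).choose i : ℚ)) := by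
      rw [Nat.cast_choose ℚ (by omega : j ≤ c+j), Nat.cast_choose ℚ h1,
          Nat.cast_choose ℚ h, Nat.cast_choose ℚ hic]
      have hE : c + j - i = c - (i - j) := by omega
      have hE2 : c + j - j = c := by omega
      rw [hE, hE2]
      have f1 : ((c+j).factorial : ℚ) ≠ 0 := by exact_mod_cast (Nat.factorial_pos _).ne'
      have f2 : (j.factorial : ℚ) ≠ 0 := by exact_mod_cast (Nat.factorial_pos _).ne'
      have f3 : (c.factorial : ℚ) ≠ 0 := by exact_mod_cast (Nat.factorial_pos _).ne'
      have f4 : ((i-j).factorial : ℚ) ≠ 0 := by exact_mod_cast (Nat.factorial_pos _).ne'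
      have f5 : ((c-(i-j)).factorial : ℚ) ≠ 0 := by exact_mod_cast (Nat.factorial_pos _).ne'
      have f6 : (i.factorial : ℚ) ≠ 0 := by exact_mod_cast (Nat.factorial_pos _).ne'
      field_simp
    exact_mod_cast hq
  · rw [Nat.choose_eq_zero_of_lt (by omega : c < i - j),
      Nat.choose_eq_zero_of_lt hic, mul_zero, mul_zero]

lemma G_zero_mid (x k : ℕ) : G x 0 k = if k = 0 then 1 else 0 := by
  cases k with
  | zero => simp [G]
  | succ n => simp [G]

lemma Ssum_rec (b c i j : ℕ) :
    Ssum (b+1) c (i+1) (j+1)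
      = Ssum (b+1) c i j + Ssum b c (i+1) (j+1) + Ssum b c (i+1) j := by
  have h1 : Ssum (b+1) c (i+1) (j+1)
      = (∑ k ∈ range (i+1),
          (b+1+c+(k+1)).choose (k+1) * G c (i+1) (k+1) * G (b+1) (j+1) (k+1))
        + (b+1+c+0).choose 0 * G c (i+1) 0 * G (b+1) (j+1) 0 :=
    Finset.sum_range_succ' _ (i+1)
  have hterm : ∀ k ∈ range (i+1),
      (b+1+c+(k+1)).choose (k+1) * G c (i+1) (k+1) * G (b+1) (j+1) (k+1)
        = (b+1+c+k).choose k * G c i k * G (b+1) j k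
          + ((b+c+(k+1)).choose (k+1) * G c (i+1) (k+1) * G b (j+1) (k+1)
             + (b+c+(k+1)).choose (k+1) * G c (i+1) (k+1) * G b j (k+1)) := by
    intro k _
    have e1 : b+1+c+(k+1) = (b+c+(k+1)) + 1 := by omega
    have e2 : b+1+c+k = b+c+(k+1) := by omega
    have ha : (b+c+(k+1)).choose k * G c (i+1) (k+1) * G (b+1) (j+1) (k+1)
        = (b+c+(k+1)).choose k * G c i k * G (b+1) j k := by
      rw [G_succ_succ, G_succ_succ]
    have hb : (b+c+(k+1)).choose (k+1) * G c (i+1) (k+1) * G (b+1) (j+1) (k+1)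
        = (b+c+(k+1)).choose (k+1) * G c (i+1) (k+1) * G b (j+1) (k+1)
          + (b+c+(k+1)).choose (k+1) * G c (i+1) (k+1) * G b j (k+1) := by
      rw [G_pascal]; ring
    rw [e2, e1, Nat.choose_succ_succ', add_mul, add_mul, ha, hb]
  rw [h1, Finset.sum_congr rfl hterm, Finset.sum_add_distrib, Finset.sum_add_distrib]
  have h4 : Ssum (b+1) c i j
      = ∑ k ∈ range (i+1), (b+1+c+k).choose k * G c i k * G (b+1) j k := rfl
  have h2 : Ssum b c (i+1) (j+1)
      = (∑ k ∈ range (i+1),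
          (b+c+(k+1)).choose (k+1) * G c (i+1) (k+1) * G b (j+1) (k+1))
        + (b+c+0).choose 0 * G c (i+1) 0 * G b (j+1) 0 :=
    Finset.sum_range_succ' _ (i+1)
  have h3 : Ssum b c (i+1) j
      = (∑ k ∈ range (i+1),
          (b+c+(k+1)).choose (k+1) * G c (i+1) (k+1) * G b j (k+1))
        + (b+c+0).choose 0 * G c (i+1) 0 * G b j 0 :=
    Finset.sum_range_succ' _ (i+1)
  rw [h4, h2, h3]
  simp only [Nat.choose_zero_right, one_mul, G_zero_right, Nat.add_zero, add_zero]
  have hp : (b+1).choose (j+1) = b.choose j + b.choose (j+1) := Nat.choose_succ_succ' b j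
  rw [hp]
  ring

lemma suranyi (b c i j : ℕ) : Ssum b c i j = (b+i).choose j * (c+j).choose i := by
  induction b generalizing i j with
  | zero =>
    have h0 : Ssum 0 c i j = if j ≤ i then (c+j).choose j * c.choose (i-j) else 0 := by
      unfold Ssum
      simp only [G_zero_left, mul_ite, mul_one, mul_zero]
      rw [Finset.sum_ite_eq' (range (i+1)) j (fun k => (0+c+k).choose k * G c i k)]
      by_cases h : j ≤ i
      · rw [if_pos (Finset.mem_range.mpr (by omega)), if_pos h]
        have hG : G c i j = c.choose (i-j) := by simp [G, h]
        rw [hG, zero_add]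
      · have hj : j ∉ range (i+1) := by simp only [Finset.mem_range]; omega
        rw [if_neg hj, if_neg h]
    rw [h0, zero_add]
    by_cases h : j ≤ i
    · rw [if_pos h]; exact subset_subset c i j h
    · rw [if_neg h, Nat.choose_eq_zero_of_lt (by omega), zero_mul]
  | succ b ihb =>
    induction i generalizing j with
    | zero =>
      unfold Ssum
      rw [Finset.sum_range_one, G_zero_right, G_zero_right]
      simp
    | succ i ihi =>
      cases j with
      | zero =>
        unfold Ssum
        simp only [G_zero_mid, mul_ite, mul_one, mul_zero]
        rw [Finset.sum_ite_eq' (range (i+1+1)) 0 (fun k => (b+1+c+k).choose k * G c (i+1) k)]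
        rw [if_pos (Finset.mem_range.mpr (by omega))]
        simp [G_zero_right]
      | succ j =>
        rw [Ssum_rec, ihi j, ihb (i+1) (j+1), ihb (i+1) j]
        have e1 : b+1+(i+1) = (b+1+i)+1 := by omega
        have e2 : c+(j+1) = (c+j)+1 := by omega
        have e3 : b+(i+1) = (b+1+i) := by omega
        rw [e1, e2, e3, Nat.choose_succ_succ' (b+1+i) j, Nat.choose_succ_succ' (c+j) i]
        ring

lemma fact_ne (n : ℕ) : ((n.factorial : ℚ)) ≠ 0 := by
  exact_mod_cast (Nat.factorial_pos n).ne'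

lemma ibinom_eq (b c i j : ℕ) :
    ibinom ((b:ℤ)+c) ((b:ℤ) + ((i:ℤ)+1) - ((j:ℤ)+1))
      = ((b+c).factorial : ℚ) * ((b+i).choose j : ℚ) * ((c+j).choose i : ℚ)
        * (i.factorial : ℚ) * (j.factorial : ℚ)
        / (((b+i).factorial : ℚ) * ((c+j).factorial : ℚ)) := by
  rcases le_or_gt j (b+i) with hj | hj
  · rcases le_or_gt i (c+j) with hi | hi
    · have harg : (b:ℤ) + ((i:ℤ)+1) - ((j:ℤ)+1) = ((b+i-j : ℕ) : ℤ) := by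
        push_cast [Nat.cast_sub hj]; ring
      rw [ibinom, harg]
      have hcond : (0:ℤ) ≤ ((b+i-j:ℕ):ℤ) ∧ ((b+i-j:ℕ):ℤ) ≤ (b:ℤ)+c := by
        constructor
        · positivity
        · have : b+i-j ≤ b+c := by omega
          exact_mod_cast this
      rw [if_pos hcond]
      have h1 : ((b:ℤ)+c).toNat = b+c := by omega
      have h2 : (((b+i-j:ℕ):ℤ)).toNat = b+i-j := Int.toNat_natCast _
      rw [h1, h2]
      have hle : b+i-j ≤ b+c := by omega
      rw [Nat.cast_choose ℚ hle, Nat.cast_choose ℚ hj, Nat.cast_choose ℚ hi]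
      have e1 : b+c-(b+i-j) = c+j-i := by omega
      have e2 : b+i-j ≤ b+i := by omega
      rw [e1]
      field_simp
    · rw [ibinom, if_neg, Nat.choose_eq_zero_of_lt hi]
      · simp
      · push_neg
        intro _
        have : (c:ℤ) + j < i := by exact_mod_cast hi
        omega
  · rw [ibinom, if_neg, Nat.choose_eq_zero_of_lt hj]
    · simp
    · push_neg
      intro h0
      exfalso
      have : (b:ℤ) + i < j := by exact_mod_cast hj
      omega

section Matrices
variable (a b c : ℕ)

def Amat : Matrix (Fin a) (Fin a) ℚ :=
  Matrix.of fun i k => (-1:ℚ)^(i:ℕ) * ((c+(i:ℕ)).factorial : ℚ) * (((k:ℕ).choose (i:ℕ) : ℕ) : ℚ)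
    * poch (b:ℚ) ((k:ℕ) - (i:ℕ)) / (((k:ℕ).factorial : ℚ))

def Bmat : Matrix (Fin a) (Fin a) ℚ :=
  Matrix.of fun j k => (-1:ℚ)^(j:ℕ) * ((b+(j:ℕ)).factorial : ℚ) * (((k:ℕ).choose (j:ℕ) : ℕ) : ℚ)
    * poch (c:ℚ) ((k:ℕ) - (j:ℕ)) / (((b+c+(k:ℕ)).factorial : ℚ))

def Pmat : Matrix (Fin a) (Fin a) ℚ :=
  Matrix.of fun k i => if (k:ℕ) ≤ (i:ℕ) then
    (-1:ℚ)^(k:ℕ) * ((b+c+(k:ℕ)).factorial : ℚ) * (((i:ℕ)).factorial : ℚ)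
      * ((c.choose ((i:ℕ)-(k:ℕ)) : ℕ) : ℚ)
      / (((k:ℕ).factorial : ℚ) * ((b+(i:ℕ)).factorial : ℚ)) else 0

def Qmat2 : Matrix (Fin a) (Fin a) ℚ :=
  Matrix.of fun k j => if (k:ℕ) ≤ (j:ℕ) then
    (-1:ℚ)^(k:ℕ) * (((j:ℕ)).factorial : ℚ) * ((b.choose ((j:ℕ)-(k:ℕ)) : ℕ) : ℚ)
      / ((c+(j:ℕ)).factorial : ℚ) else 0

end Matrices

lemma QA (a b c : ℕ) : Qmat2 a b c * Amat a b c = 1 := by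
  ext k k'
  rw [Matrix.mul_apply, Matrix.one_apply]
  have hsum : ∀ j : Fin a, Qmat2 a b c k j * Amat a b c j k'
      = (if (k:ℕ) ≤ (j:ℕ) then (-1:ℚ)^(k:ℕ) * (((j:ℕ).factorial:ℕ):ℚ)
            * ((b.choose ((j:ℕ)-(k:ℕ)) : ℕ) : ℚ) / (((c+(j:ℕ)).factorial:ℕ):ℚ) else 0)
          * ((-1:ℚ)^(j:ℕ) * (((c+(j:ℕ)).factorial:ℕ):ℚ) * (((k':ℕ).choose (j:ℕ) : ℕ) : ℚ)
            * poch (b:ℚ) ((k':ℕ) - (j:ℕ)) / (((k':ℕ).factorial:ℕ):ℚ)) := by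
    intro j; rfl
  rw [Finset.sum_congr rfl (fun j _ => hsum j)]
  rw [Fin.sum_univ_eq_sum_range (fun j => (if (k:ℕ) ≤ j then (-1:ℚ)^(k:ℕ) * ((j.factorial:ℕ):ℚ)
            * ((b.choose (j-(k:ℕ)) : ℕ) : ℚ) / (((c+j).factorial:ℕ):ℚ) else 0)
          * ((-1:ℚ)^j * (((c+j).factorial:ℕ):ℚ) * (((k':ℕ).choose j : ℕ) : ℚ)
            * poch (b:ℚ) ((k':ℕ) - j) / (((k':ℕ).factorial:ℕ):ℚ))) a]
  set kn := (k:ℕ) with hkn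
  set k'n := (k':ℕ) with hk'n
  rcases le_or_gt kn k'n with hle | hlt
  · have hsub : Finset.Ico kn (k'n+1) ⊆ range a := by
      intro x hx
      rw [Finset.mem_range]
      have := (Finset.mem_Ico.mp hx).2
      have := k'.isLt
      omega
    rw [← Finset.sum_subset hsub]
    · rw [Finset.sum_Ico_eq_sum_range]
      have hd : k'n + 1 - kn = (k'n - kn) + 1 := by omega
      rw [hd]
      set d := k'n - kn with hdd
      have hterm : ∀ m ∈ range (d+1),
          (if kn ≤ kn+m then (-1:ℚ)^kn * (((kn+m).factorial:ℕ):ℚ)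
              * ((b.choose ((kn+m)-kn) : ℕ) : ℚ) / (((c+(kn+m)).factorial:ℕ):ℚ) else 0)
            * ((-1:ℚ)^(kn+m) * (((c+(kn+m)).factorial:ℕ):ℚ) * ((k'n.choose (kn+m) : ℕ) : ℚ)
              * poch (b:ℚ) (k'n - (kn+m)) / ((k'n.factorial:ℕ):ℚ))
          = (-1:ℚ)^m * (b.choose m : ℚ) * poch (b:ℚ) (d - m) / ((d-m).factorial : ℚ) := by
        intro m hm
        have hm' : m ≤ d := by have := Finset.mem_range.mp hm; omega
        rw [if_pos (Nat.le_add_right kn m)]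
        have e1 : (kn+m)-kn = m := by omega
        have e2 : k'n - (kn+m) = d-m := by omega
        have e3 : kn+m ≤ k'n := by omega
        rw [e1, e2, Nat.cast_choose ℚ e3, e2, pow_add]
        have hsq : (-1:ℚ)^kn * (-1:ℚ)^kn = 1 := by rw [← mul_pow]; norm_num
        have f1 := fact_ne (kn+m)
        have f2 := fact_ne (c+(kn+m))
        have f3 := fact_ne k'n
        have f4 := fact_ne (d-m)
        field_simp
        linear_combination ((b.choose m:ℚ) * poch (b:ℚ) (d-m)) * hsq
      rw [Finset.sum_congr rfl hterm, key1]
      have hiff : k = k' ↔ d = 0 := by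
        rw [Fin.ext_iff]; omega
      exact (if_congr hiff.symm rfl rfl)
    · intro j hj hnot
      rw [Finset.mem_Ico, not_and_or] at hnot
      rcases hnot with h | h
      · rw [if_neg (by omega), zero_mul]
      · have : k'n < j := by omega
        rw [Nat.choose_eq_zero_of_lt this]
        push_cast
        ring
  · rw [if_neg (by rw [Fin.ext_iff]; omega)]
    apply Finset.sum_eq_zero
    intro j hj
    by_cases hkj : kn ≤ (j:ℕ)
    · have : k'n < j := by omega
      rw [Nat.choose_eq_zero_of_lt this]
      push_cast
      ring
    · rw [if_neg hkj, zero_mul]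

lemma BP (a b c : ℕ) : Bmat a b c * Pmat a b c = 1 := by
  ext j i
  rw [Matrix.mul_apply, Matrix.one_apply]
  have hsum : ∀ k : Fin a, Bmat a b c j k * Pmat a b c k i
      = ((-1:ℚ)^(j:ℕ) * (((b+(j:ℕ)).factorial:ℕ):ℚ) * (((k:ℕ).choose (j:ℕ) : ℕ) : ℚ)
          * poch (c:ℚ) ((k:ℕ) - (j:ℕ)) / (((b+c+(k:ℕ)).factorial:ℕ):ℚ))
        * (if (k:ℕ) ≤ (i:ℕ) then
            (-1:ℚ)^(k:ℕ) * (((b+c+(k:ℕ)).factorial:ℕ):ℚ) * (((i:ℕ).factorial:ℕ):ℚ)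
              * ((c.choose ((i:ℕ)-(k:ℕ)) : ℕ) : ℚ)
              / ((((k:ℕ).factorial:ℕ):ℚ) * (((b+(i:ℕ)).factorial:ℕ):ℚ)) else 0) := by
    intro x; rfl
  rw [Finset.sum_congr rfl (fun x _ => hsum x)]
  rw [Fin.sum_univ_eq_sum_range (fun k => ((-1:ℚ)^(j:ℕ) * (((b+(j:ℕ)).factorial:ℕ):ℚ)
          * ((k.choose (j:ℕ) : ℕ) : ℚ)
          * poch (c:ℚ) (k - (j:ℕ)) / (((b+c+k).factorial:ℕ):ℚ))
        * (if k ≤ (i:ℕ) then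
            (-1:ℚ)^k * (((b+c+k).factorial:ℕ):ℚ) * (((i:ℕ).factorial:ℕ):ℚ)
              * ((c.choose ((i:ℕ)-k) : ℕ) : ℚ)
              / (((k.factorial:ℕ):ℚ) * (((b+(i:ℕ)).factorial:ℕ):ℚ)) else 0)) a]
  set jn := (j:ℕ) with hjn
  set inn := (i:ℕ) with hinn
  rcases le_or_gt jn inn with hle | hlt
  · have hsub : Finset.Ico jn (inn+1) ⊆ range a := by
      intro x hx
      rw [Finset.mem_range]
      have := (Finset.mem_Ico.mp hx).2
      have := i.isLt
      omega
    rw [← Finset.sum_subset hsub]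
    · rw [Finset.sum_Ico_eq_sum_range]
      have hd : inn + 1 - jn = (inn - jn) + 1 := by omega
      rw [hd]
      set d := inn - jn with hdd
      have hterm : ∀ m ∈ range (d+1),
          ((-1:ℚ)^jn * (((b+jn).factorial:ℕ):ℚ) * (((jn+m).choose jn : ℕ) : ℚ)
            * poch (c:ℚ) ((jn+m) - jn) / (((b+c+(jn+m)).factorial:ℕ):ℚ))
          * (if jn+m ≤ inn then
              (-1:ℚ)^(jn+m) * (((b+c+(jn+m)).factorial:ℕ):ℚ) * ((inn.factorial:ℕ):ℚ)
                * ((c.choose (inn-(jn+m)) : ℕ) : ℚ)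
                / ((((jn+m).factorial:ℕ):ℚ) * (((b+inn).factorial:ℕ):ℚ)) else 0)
          = (((b+jn).factorial:ℚ) * (inn.factorial:ℚ)
              / ((jn.factorial:ℚ) * ((b+inn).factorial:ℚ)))
            * ((-1:ℚ)^m * poch (c:ℚ) m * (c.choose (d-m) : ℚ) / (m.factorial : ℚ)) := by
        intro m hm
        have hm' : m ≤ d := by have := Finset.mem_range.mp hm; omega
        rw [if_pos (by omega : jn+m ≤ inn)]
        have e1 : (jn+m)-jn = m := by omega
        have e2 : inn - (jn+m) = d-m := by omega
        have e3 : jn ≤ jn+m := by omega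
        rw [e1, e2, Nat.cast_choose ℚ e3, e1, pow_add]
        have hsq : (-1:ℚ)^jn * (-1:ℚ)^jn = 1 := by rw [← mul_pow]; norm_num
        have f1 := fact_ne (jn+m)
        have f2 := fact_ne (b+c+(jn+m))
        have f3 := fact_ne jn
        have f4 := fact_ne m
        have f5 := fact_ne (b+inn)
        have f6 := fact_ne (b+jn)
        field_simp
        linear_combination (poch (c:ℚ) m * (c.choose (d-m):ℚ)) * hsq
      rw [Finset.sum_congr rfl hterm, ← Finset.mul_sum, key2]
      by_cases hd0 : d = 0
      · have hje : jn = inn := by omega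
        have hji : j = i := Fin.ext (by rw [← hjn, ← hinn]; omega)
        rw [hd0, hji, hje]
        norm_num
        field_simp
      · have hne : ¬ j = i := by
          intro h
          have : jn = inn := by rw [hjn, hinn, h]
          omega
        rw [if_neg hd0, mul_zero, if_neg hne]
    · intro x hx hnot
      rw [Finset.mem_Ico, not_and_or] at hnot
      rcases hnot with h | h
      · have : x < jn := by omega
        rw [Nat.choose_eq_zero_of_lt this]
        push_cast
        ring
      · rw [if_neg (by omega), mul_zero]
  · rw [if_neg (by rw [Fin.ext_iff]; omega)]
    apply Finset.sum_eq_zero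
    intro x hx
    by_cases hxi : x ≤ inn
    · have : x < jn := by omega
      rw [Nat.choose_eq_zero_of_lt this]
      push_cast
      ring
    · rw [if_neg hxi, mul_zero]

lemma MPQ (a b c : ℕ) :
    (Matrix.of fun i j : Fin a =>
        ibinom ((b:ℤ)+c) ((b:ℤ) + (((i:ℕ):ℤ)+1) - (((j:ℕ):ℤ)+1)))
      = (Pmat a b c).transpose * Qmat2 a b c := by
  ext i j
  rw [Matrix.mul_apply]
  simp only [Matrix.of_apply]
  set inn := (i:ℕ) with hinn
  set jn := (j:ℕ) with hjn
  have hsum : ∀ k : Fin a, (Pmat a b c).transpose i k * Qmat2 a b c k j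
      = ((inn.factorial : ℚ) * (jn.factorial : ℚ) * ((b+c).factorial : ℚ)
          / (((b+inn).factorial : ℚ) * ((c+jn).factorial : ℚ)))
        * ((((b+c+(k:ℕ)).choose (k:ℕ) * G c inn (k:ℕ) * G b jn (k:ℕ) : ℕ)) : ℚ) := by
    intro k
    show (if (k:ℕ) ≤ inn then
        (-1:ℚ)^(k:ℕ) * (((b+c+(k:ℕ)).factorial:ℕ):ℚ) * ((inn.factorial:ℕ):ℚ)
          * ((c.choose (inn-(k:ℕ)) : ℕ) : ℚ)
          / ((((k:ℕ).factorial:ℕ):ℚ) * (((b+inn).factorial:ℕ):ℚ)) else 0)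
      * (if (k:ℕ) ≤ jn then
        (-1:ℚ)^(k:ℕ) * ((jn.factorial:ℕ):ℚ) * ((b.choose (jn-(k:ℕ)) : ℕ) : ℚ)
          / (((c+jn).factorial:ℕ):ℚ) else 0) = _
    by_cases h1 : (k:ℕ) ≤ inn
    · by_cases h2 : (k:ℕ) ≤ jn
      · rw [if_pos h1, if_pos h2]
        unfold G
        rw [if_pos h1, if_pos h2]
        have e3 : (k:ℕ) ≤ b+c+(k:ℕ) := by omega
        have e4 : b+c+(k:ℕ) - (k:ℕ) = b+c := by omega
        push_cast
        rw [Nat.cast_choose ℚ e3, e4]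
        have hsq : (-1:ℚ)^(k:ℕ) * (-1:ℚ)^(k:ℕ) = 1 := by rw [← mul_pow]; norm_num
        have f1 := fact_ne (k:ℕ)
        have f2 := fact_ne (b+inn)
        have f3 := fact_ne (c+jn)
        have f4 := fact_ne (b+c)
        have f5 := fact_ne (b+c+(k:ℕ))
        field_simp
        linear_combination ((c.choose (inn-(k:ℕ)):ℚ) * (b.choose (jn-(k:ℕ)):ℚ)) * hsq
      · rw [if_neg h2, mul_zero]
        unfold G
        rw [if_neg h2]
        push_cast
        ring
    · rw [if_neg h1, zero_mul]
      unfold G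
      rw [if_neg h1]
      push_cast
      ring
  rw [Finset.sum_congr rfl (fun k _ => hsum k), ← Finset.mul_sum]
  rw [Fin.sum_univ_eq_sum_range
    (fun k => ((((b+c+k).choose k * G c inn k * G b jn k : ℕ)) : ℚ)) a]
  have hcut : ∑ k ∈ range a, ((((b+c+k).choose k * G c inn k * G b jn k : ℕ)) : ℚ)
      = ((Ssum b c inn jn : ℕ) : ℚ) := by
    rw [Ssum]
    push_cast
    rw [← Finset.sum_subset (Finset.range_subset_range.mpr
      (show inn + 1 ≤ a by have := i.isLt; omega))]
    intro x hx hnx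
    have : inn < x := by
      simp only [Finset.mem_range] at hx hnx
      omega
    have : G c inn x = 0 := by
      unfold G
      rw [if_neg (by omega)]
    rw [this]
    push_cast
    ring
  rw [hcut, suranyi, ibinom_eq b c inn jn]
  have f1 := fact_ne (b+inn)
  have f2 := fact_ne (c+jn)
  push_cast
  field_simp

lemma NABT (a b c : ℕ) (i j : Fin a) :
    (Amat a b c * (Bmat a b c).transpose) i j
      = (-1 : ℚ) ^ ((i:ℕ) + (j:ℕ)) * (((b + (j:ℕ)).factorial : ℕ) : ℚ)
          * (((c + (i:ℕ)).factorial : ℕ) : ℚ) *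
          ∑ k ∈ Finset.Icc (max ((i:ℕ) + 1) ((j:ℕ) + 1)) a,
            (((k - 1).choose (i:ℕ) : ℕ) : ℚ) * (((k - 1).choose (j:ℕ) : ℕ) : ℚ) *
              poch (b:ℚ) (k - ((i:ℕ) + 1)) * poch (c:ℚ) (k - ((j:ℕ) + 1)) /
              ((((k - 1).factorial : ℕ) : ℚ) * (((b + c + k - 1).factorial : ℕ) : ℚ)) := by
  rw [Matrix.mul_apply]
  set inn := (i:ℕ) with hinn
  set jn := (j:ℕ) with hjn
  have hsum : ∀ k : Fin a, Amat a b c i k * (Bmat a b c).transpose k j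
      = ((-1:ℚ)^inn * (((c+inn).factorial:ℕ):ℚ) * (((k:ℕ).choose inn : ℕ) : ℚ)
          * poch (b:ℚ) ((k:ℕ) - inn) / (((k:ℕ).factorial:ℕ):ℚ))
        * ((-1:ℚ)^jn * (((b+jn).factorial:ℕ):ℚ) * (((k:ℕ).choose jn : ℕ) : ℚ)
          * poch (c:ℚ) ((k:ℕ) - jn) / (((b+c+(k:ℕ)).factorial:ℕ):ℚ)) := by
    intro k; rfl
  rw [Finset.sum_congr rfl (fun k _ => hsum k)]
  rw [Fin.sum_univ_eq_sum_range (fun k => ((-1:ℚ)^inn * (((c+inn).factorial:ℕ):ℚ)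
          * ((k.choose inn : ℕ) : ℚ)
          * poch (b:ℚ) (k - inn) / ((k.factorial:ℕ):ℚ))
        * ((-1:ℚ)^jn * (((b+jn).factorial:ℕ):ℚ) * ((k.choose jn : ℕ) : ℚ)
          * poch (c:ℚ) (k - jn) / (((b+c+k).factorial:ℕ):ℚ))) a]
  set M := max inn jn with hM
  have hMa : M < a := by
    have := i.isLt; have := j.isLt
    omega
  have hmax : max (inn + 1) (jn + 1) = M + 1 := by omega
  rw [hmax]
  have hIcc : Finset.Icc (M+1) a = Finset.Ico (M+1) (a+1) := by
    rw [Finset.Ico_add_one_right_eq_Icc]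
  rw [hIcc]
  have hsub : Finset.Ico M a ⊆ range a := by
    intro x hx
    rw [Finset.mem_range]
    exact (Finset.mem_Ico.mp hx).2
  rw [← Finset.sum_subset hsub]
  · rw [Finset.sum_Ico_eq_sum_range, Finset.mul_sum, Finset.sum_Ico_eq_sum_range]
    have hlen : a + 1 - (M+1) = a - M := by omega
    rw [hlen]
    apply Finset.sum_congr rfl
    intro t _
    have e1 : M + 1 + t - 1 = M + t := by omega
    have e2 : M + 1 + t - (inn + 1) = M + t - inn := by omega
    have e3 : M + 1 + t - (jn + 1) = M + t - jn := by omega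
    have e4 : b + c + (M + 1 + t) - 1 = b + c + (M + t) := by omega
    rw [e1, e2, e3, e4, pow_add]
    have f1 := fact_ne (M+t)
    have f2 := fact_ne (b+c+(M+t))
    field_simp
  · intro x hx hnx
    have hxM : x < M := by
      rw [Finset.mem_range] at hx
      rw [Finset.mem_Ico, not_and_or] at hnx
      omega
    rcases max_cases inn jn with ⟨hm, _⟩ | ⟨hm, _⟩
    · have : x < inn := by omega
      rw [Nat.choose_eq_zero_of_lt this]
      push_cast
      ring
    · have : x < jn := by omega
      rw [Nat.choose_eq_zero_of_lt this]
      push_cast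
      ring
end MacAux

/-- Entrywise formula for the inverse of MacMahon's matrix. -/
theorem macmahon_inverse_entry (a b c : ℕ) :
    let M : Matrix (Fin a) (Fin a) ℚ := Matrix.of fun i j =>
      ibinom ((b : ℤ) + c) ((b : ℤ) + (((i : ℕ) : ℤ) + 1) - (((j : ℕ) : ℤ) + 1))
    IsUnit M.det ∧
      ∀ i j : Fin a,
        M⁻¹ i j =
          (-1 : ℚ) ^ ((i : ℕ) + (j : ℕ)) * (Nat.factorial (b + (j : ℕ)) : ℚ) *
              (Nat.factorial (c + (i : ℕ)) : ℚ) *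
            ∑ k ∈ Finset.Icc (max ((i : ℕ) + 1) ((j : ℕ) + 1)) a,
              (Nat.choose (k - 1) (i : ℕ) : ℚ) * (Nat.choose (k - 1) (j : ℕ) : ℚ) *
                poch (b : ℚ) (k - ((i : ℕ) + 1)) * poch (c : ℚ) (k - ((j : ℕ) + 1)) /
                ((Nat.factorial (k - 1) : ℚ) * (Nat.factorial (b + c + k - 1) : ℚ)) := by
  intro M
  have hM : M = (MacAux.Pmat a b c).transpose * MacAux.Qmat2 a b c := MacAux.MPQ a b c
  have hright : M * (MacAux.Amat a b c * (MacAux.Bmat a b c).transpose) = 1 := by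
    rw [hM, mul_assoc, ← mul_assoc (MacAux.Qmat2 a b c), MacAux.QA,
      one_mul, ← Matrix.transpose_mul, MacAux.BP, Matrix.transpose_one]
  refine ⟨Matrix.isUnit_det_of_right_inverse hright, ?_⟩
  intro i j
  rw [Matrix.inv_eq_right_inv hright]
  exact MacAux.NABT a b c i j
end
end

section
/- Let a, b, c, d be nonnegative integers and p an integer. Write the matrix Q = Q(a,b,c,d,p) in block form Q = [[Q2, Q1],[Q3, Q4]], where Q2 is the a×a block Q2_{i,j} = C(b+c, c−i+j), Q1 is the a×d block Q1_{i,j} = C(2j−1, j−i+p), Q3 is the d×a block Q3_{i,j} = C(b+c−2i+1, c−i+j−p), and Q4 is the d×d block Q4_{i,j} = C(2(j−i), j−i). Then Q2 is invertible over ℚ, and setting F := Q4 − Q3·Q2^{−1}·Q1, one has E(a,b,c,d,p) = det F · M(a,b,c) = det F · ∏_{i=0}^{a−1} i!·(b+c+i)!/((b+i)!·(c+i)!). -/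
open Finset

noncomputable section

section AuxMacMahon
open Nat

def ffactZ (m : ℤ) : ℚ := if 0 ≤ m then (m.toNat.factorial : ℚ) else 0

def dff (n m : ℤ) : ℚ := ibinom n m * ffactZ m

lemma ibinom_of_neg {n k : ℤ} (h : k < 0) : ibinom n k = 0 := by
  simp [ibinom, not_le.2 h]

lemma ibinom_of_gt {n k : ℤ} (h : n < k) : ibinom n k = 0 := by
  simp only [ibinom, ite_eq_right_iff]
  rintro ⟨-, h2⟩; omega

lemma ibinom_zero {n : ℤ} (hn : 0 ≤ n) : ibinom n 0 = 1 := by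
  simp [ibinom, hn]

lemma ibinom_nat (n k : ℕ) : ibinom n k = (n.choose k : ℚ) := by
  rcases le_or_gt (k : ℤ) (n : ℤ) with h | h
  · simp only [ibinom, Int.toNat_natCast]
    rw [if_pos ⟨Int.natCast_nonneg k, h⟩]
  · rw [ibinom_of_gt h, Nat.choose_eq_zero_of_lt (by exact_mod_cast h), Nat.cast_zero]

/-- absorption identity, valid for all integers. -/
lemma ibinom_absorb (n m : ℤ) :
    (m : ℚ) * ibinom n m = ((n : ℚ) - m + 1) * ibinom n (m - 1) := by
  rcases lt_trichotomy m 0 with hm | hm | hm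
  · rw [ibinom_of_neg hm, ibinom_of_neg (by omega), mul_zero, mul_zero]
  · subst hm
    rw [ibinom_of_neg (show (0:ℤ) - 1 < 0 by omega), mul_zero]
    push_cast; ring
  · rcases le_or_gt m n with h | h
    · have hn : 0 ≤ n := le_trans (le_of_lt hm) h
      obtain ⟨N, rfl⟩ := Int.eq_ofNat_of_zero_le hn
      obtain ⟨M, rfl⟩ := Int.eq_ofNat_of_zero_le (le_of_lt hm)
      have hM : 1 ≤ M := by exact_mod_cast hm
      have hMN : M ≤ N := by exact_mod_cast h
      have h1 : ibinom (N:ℤ) (M:ℤ) = (N.choose M : ℚ) := ibinom_nat N M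
      have h2 : ibinom (N:ℤ) ((M:ℤ) - 1) = (N.choose (M-1) : ℚ) := by
        have : ((M:ℤ) - 1) = ((M - 1 : ℕ) : ℤ) := by omega
        rw [this, ibinom_nat]
      rw [h1, h2]
      rw [Nat.cast_choose ℚ hMN, Nat.cast_choose ℚ (show M - 1 ≤ N by omega)]
      have e1 : M ! = M * (M-1)! := by
        conv_lhs => rw [show M = (M-1) + 1 by omega]
        rw [Nat.factorial_succ]
        congr 1; omega
      have e2 : (N - (M-1))! = (N - M + 1) * (N - M)! := by
        rw [show N - (M-1) = (N - M) + 1 by omega, Nat.factorial_succ]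
      have c1 : ((M - 1 : ℕ) : ℚ) = (M : ℚ) - 1 := by push_cast [Nat.cast_sub hM]; ring
      have c2 : ((N - M : ℕ) : ℚ) = (N : ℚ) - M := by push_cast [Nat.cast_sub hMN]; ring
      have c3 : ((N - M + 1 : ℕ) : ℚ) = (N : ℚ) - M + 1 := by
        push_cast [Nat.cast_sub hMN]; ring
      rw [e1, e2]
      push_cast [c1, c2, c3]
      have f1 : ((M-1)! : ℚ) ≠ 0 := by exact_mod_cast (Nat.factorial_ne_zero _)
      have f2 : ((N-M)! : ℚ) ≠ 0 := by exact_mod_cast (Nat.factorial_ne_zero _)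
      have f3 : (M : ℚ) ≠ 0 := by
        have : (1:ℚ) ≤ M := by exact_mod_cast hM
        linarith
      have f4 : (N : ℚ) - M + 1 ≠ 0 := by
        have : (M:ℚ) ≤ N := by exact_mod_cast hMN
        linarith
      field_simp
    · rw [ibinom_of_gt h]
      rcases lt_trichotomy (m - 1) n with h2 | h2 | h2
      · omega
      · have : ((n:ℚ) - m + 1) = 0 := by
          have : m = n + 1 := by omega
          subst this; push_cast; ring
        rw [this, mul_zero, zero_mul]
      · rw [ibinom_of_gt h2, mul_zero, mul_zero]

lemma dff_of_neg {n m : ℤ} (h : m < 0) : dff n m = 0 := by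
  simp [dff, ibinom_of_neg h]

lemma dff_zero {n : ℤ} (hn : 0 ≤ n) : dff n 0 = 1 := by
  simp [dff, ibinom_zero hn, ffactZ]

lemma ffactZ_succ {m : ℤ} (hm : 0 ≤ m) : ffactZ (m + 1) = ((m : ℚ) + 1) * ffactZ m := by
  simp only [ffactZ, if_pos hm, if_pos (by omega : (0:ℤ) ≤ m + 1)]
  rw [show (m + 1).toNat = m.toNat + 1 by omega, Nat.factorial_succ]
  have : ((m.toNat : ℚ)) = (m : ℚ) := by exact_mod_cast Int.toNat_of_nonneg hm
  push_cast
  rw [this]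

lemma dff_succ (n : ℤ) {m : ℤ} (hm : 0 ≤ m) :
    dff n (m + 1) = ((n : ℚ) - m) * dff n m := by
  unfold dff
  rw [ffactZ_succ hm]
  have h := ibinom_absorb n (m + 1)
  rw [show m + 1 - 1 = m by ring] at h
  push_cast at h
  linear_combination (ffactZ m) * h

lemma ffactZ_nat (n : ℕ) : ffactZ n = (n ! : ℚ) := by simp [ffactZ]

lemma dff_of_gt {n m : ℤ} (h : n < m) : dff n m = 0 := by simp [dff, ibinom_of_gt h]

/-- the summand of the key hypergeometric sum -/
def Tt (b c i j k : ℕ) : ℚ :=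
  (i.choose k : ℚ) * (j.choose k : ℚ) * (k ! : ℚ) *
    dff c ((i:ℤ) - k) * dff b ((j:ℤ) - k) * ((b + c + k)! : ℚ)

def Phi (b c i j : ℕ) : ℚ := ∑ k ∈ range (j+1), Tt b c i j k

def Rr (b c i j : ℕ) : ℚ := ibinom (b + c) ((c:ℤ) + j - i) * ((b+i)! : ℚ) * ((c+j)! : ℚ)

lemma Tt_zero_right {b c i j k : ℕ} (h : j < k) : Tt b c i j k = 0 := by
  simp [Tt, Nat.choose_eq_zero_of_lt h]

lemma Tt_zero_left {b c i j k : ℕ} (h : i < k) : Tt b c i j k = 0 := by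
  simp [Tt, Nat.choose_eq_zero_of_lt h]

lemma star1 (b c i j k : ℕ) :
    ((j:ℚ) + 1 - k) * Tt b c i (j+1) k
      = ((j:ℚ) + 1) * ((b:ℚ) - j + k) * Tt b c i j k := by
  rcases le_or_gt k j with hkj | hkj
  · have ch1 : ((j:ℚ) + 1 - k) * ((j+1).choose k : ℚ) = ((j:ℚ) + 1) * (j.choose k : ℚ) := by
      have h := Nat.choose_mul_succ_eq j k
      have hc : ((j.choose k * (j+1) : ℕ) : ℚ) = (((j+1).choose k * (j+1-k) : ℕ) : ℚ) := by
        exact_mod_cast congrArg (Nat.cast (R := ℚ)) h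
      push_cast [Nat.cast_sub (by omega : k ≤ j + 1)] at hc
      linarith [hc]
    have hdff : dff b ((j:ℤ) + 1 - k) = ((b:ℚ) - ((j:ℚ) - k)) * dff b ((j:ℤ) - k) := by
      have := dff_succ (b:ℤ) (m := (j:ℤ) - k) (by omega)
      rw [show (j:ℤ) - k + 1 = (j:ℤ) + 1 - k by ring] at this
      rw [this]; push_cast; ring
    unfold Tt
    rw [show (((j+1 : ℕ)):ℤ) - (k:ℤ) = (j:ℤ) + 1 - k by push_cast; ring, hdff]
    push_cast
    linear_combination ((i.choose k : ℚ) * (k ! : ℚ) * dff c ((i:ℤ) - k) *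
      ((b:ℚ) - j + k) * dff b ((j:ℤ) - k) * ((b + c + k)! : ℚ)) * ch1
  · rcases eq_or_lt_of_le (by omega : j + 1 ≤ k) with hk1 | hk1
    · rw [Tt_zero_right hkj, show ((j:ℚ) + 1 - k) = 0 by rw [← hk1]; push_cast; ring]
      ring
    · rw [Tt_zero_right hkj, Tt_zero_right hk1]; ring

lemma star4 (b c i j k : ℕ) :
    ((k:ℚ) + 1) * ((c:ℚ) + k + 1 - i) * Tt b c i (j+1) (k+1)
      = ((j:ℚ) + 1) * ((i:ℚ) - k) * ((b:ℚ) + c + k + 1) * Tt b c i j k := by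
  rcases lt_or_ge k i with hki | hki
  · have hk1 : (0:ℚ) < (k:ℚ) + 1 := by positivity
    have r1 : (i.choose (k+1) : ℚ) = ((i:ℚ) - k) * (i.choose k : ℚ) / ((k:ℚ) + 1) := by
      have h := Nat.choose_succ_right_eq i k
      have hc : ((i.choose (k+1) * (k+1) : ℕ) : ℚ) = ((i.choose k * (i - k) : ℕ) : ℚ) := by
        exact_mod_cast congrArg (Nat.cast (R := ℚ)) h
      push_cast [Nat.cast_sub (le_of_lt hki)] at hc
      field_simp
      linarith [hc]
    have r2 : (((j+1)).choose (k+1) : ℚ) = ((j:ℚ) + 1) * (j.choose k : ℚ) / ((k:ℚ) + 1) := by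
      have h := Nat.add_one_mul_choose_eq j k
      have hc : (((j+1) * j.choose k : ℕ) : ℚ) = (((j+1).choose (k+1) * (k+1) : ℕ) : ℚ) := by
        exact_mod_cast congrArg (Nat.cast (R := ℚ)) h
      push_cast at hc
      field_simp
      linarith [hc]
    have r4 : dff c ((i:ℤ) - k) = ((c:ℚ) + k + 1 - i) * dff c ((i:ℤ) - (k+1)) := by
      have := dff_succ (c:ℤ) (m := (i:ℤ) - k - 1) (by omega)
      rw [show (i:ℤ) - k - 1 + 1 = (i:ℤ) - k by ring] at this
      rw [this, show (i:ℤ) - (k+1) = (i:ℤ) - k - 1 by ring]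
      push_cast; ring
    unfold Tt
    rw [show (((j+1:ℕ)):ℤ) - ((k+1:ℕ):ℤ) = (j:ℤ) - k by push_cast; ring]
    rw [show ((i:ℤ) - ((k+1:ℕ):ℤ)) = (i:ℤ) - ((k:ℕ)+1) by push_cast; ring]
    rw [r1, r2, r4]
    rw [show (k+1)! = (k+1) * k ! from Nat.factorial_succ k]
    rw [show b + c + (k+1) = (b+c+k) + 1 by ring, Nat.factorial_succ]
    push_cast
    field_simp
  · rw [Tt_zero_left (show i < k + 1 by omega)]
    rcases eq_or_lt_of_le hki with hk1 | hk1
    · rw [show ((i:ℚ) - k) = 0 by rw [hk1]; ring]; ring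
    · rw [Tt_zero_left hk1]; ring

lemma PT (b c i j k : ℕ) :
    ((j:ℚ)+1) * ((c:ℚ)+j+1-i) * Tt b c i (j+1) k
      - ((j:ℚ)+1) * ((b:ℚ)+i-j) * ((c:ℚ)+j+1) * Tt b c i j k
    = (k:ℚ) * ((k:ℚ)+c-i) * Tt b c i (j+1) k
      - ((k:ℚ)+1) * ((k:ℚ)+1+c-i) * Tt b c i (j+1) (k+1) := by
  linear_combination ((c:ℚ) - i + j + 1 + k) * star1 b c i j k + star4 b c i j k

lemma recJ (b c i j : ℕ) :
    ((c:ℚ)+j+1-i) * Phi b c i (j+1) = ((b:ℚ)+i-j) * ((c:ℚ)+j+1) * Phi b c i j := by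
  have hsum : ∑ k ∈ range (j+2),
      (((j:ℚ)+1) * ((c:ℚ)+j+1-i) * Tt b c i (j+1) k
        - ((j:ℚ)+1) * ((b:ℚ)+i-j) * ((c:ℚ)+j+1) * Tt b c i j k)
      = ∑ k ∈ range (j+2),
      ((fun k : ℕ => (k:ℚ) * ((k:ℚ)+c-i) * Tt b c i (j+1) k) k
        - (fun k : ℕ => (k:ℚ) * ((k:ℚ)+c-i) * Tt b c i (j+1) k) (k+1)) := by
    refine Finset.sum_congr rfl (fun k _ => ?_)
    have := PT b c i j k
    push_cast
    push_cast at this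
    linarith [this]
  rw [Finset.sum_range_sub'] at hsum
  simp only [Finset.sum_sub_distrib, ← Finset.mul_sum] at hsum
  have e1 : ∑ k ∈ range (j+2), Tt b c i (j+1) k = Phi b c i (j+1) := rfl
  have e2 : ∑ k ∈ range (j+2), Tt b c i j k = Phi b c i j := by
    rw [Finset.sum_range_succ, Tt_zero_right (by omega), add_zero]; rfl
  rw [e1, e2] at hsum
  have e3 : Tt b c i (j+1) (j+2) = 0 := Tt_zero_right (by omega)
  rw [e3] at hsum
  simp only [Nat.cast_zero, zero_mul, mul_zero, sub_zero] at hsum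
  have hj1 : ((j:ℚ) + 1) ≠ 0 := by positivity
  apply mul_left_cancel₀ hj1
  push_cast at hsum ⊢
  linarith [hsum]

lemma Tt_symm (b c i j k : ℕ) : Tt b c i j k = Tt c b j i k := by
  unfold Tt
  rw [show c + b + k = b + c + k by ring]
  ring

lemma Phi_eq_sum {b c i j N : ℕ} (hN : j + 1 ≤ N) :
    Phi b c i j = ∑ k ∈ range N, Tt b c i j k := by
  unfold Phi
  refine Finset.sum_subset (Finset.range_subset_range.2 hN) (fun k _ hk => ?_)
  rw [Finset.mem_range, not_lt] at hk
  exact Tt_zero_right (by omega)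

lemma Phi_symm (b c i j : ℕ) : Phi b c i j = Phi c b j i := by
  rw [Phi_eq_sum (N := i + j + 1) (by omega), Phi_eq_sum (N := i + j + 1) (by omega)]
  exact Finset.sum_congr rfl (fun k _ => Tt_symm b c i j k)

lemma recI (b c i j : ℕ) :
    ((b:ℚ)+i+1-j) * Phi b c (i+1) j = ((c:ℚ)+j-i) * ((b:ℚ)+i+1) * Phi b c i j := by
  rw [Phi_symm b c (i+1) j, Phi_symm b c i j]
  exact recJ c b j i

lemma recJ_R (b c i j : ℕ) :
    ((c:ℚ)+j+1-i) * Rr b c i (j+1) = ((b:ℚ)+i-j) * ((c:ℚ)+j+1) * Rr b c i j := by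
  unfold Rr
  have habs := ibinom_absorb ((b:ℤ) + c) ((c:ℤ) + j + 1 - i)
  rw [show (c:ℤ) + j + 1 - i - 1 = (c:ℤ) + j - i by ring] at habs
  rw [show ((c:ℤ) + ((j:ℕ)+1:ℕ) - i) = (c:ℤ) + j + 1 - i by push_cast; ring]
  rw [show c + (j+1) = (c+j) + 1 by ring, Nat.factorial_succ]
  push_cast
  push_cast at habs
  linear_combination ((b+i)! : ℚ) * ((c+j)! : ℚ) * ((c:ℚ)+j+1) * habs

lemma recI_R (b c i j : ℕ) :
    ((b:ℚ)+i+1-j) * Rr b c (i+1) j = ((c:ℚ)+j-i) * ((b:ℚ)+i+1) * Rr b c i j := by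
  unfold Rr
  have habs := ibinom_absorb ((b:ℤ) + c) ((c:ℤ) + j - i)
  rw [show (c:ℤ) + j - i - 1 = (c:ℤ) + j - (i+1) by ring] at habs
  rw [show ((c:ℤ) + j - ((i:ℕ)+1:ℕ)) = (c:ℤ) + j - (i+1) by push_cast; ring]
  rw [show b + (i+1) = (b+i) + 1 by ring, Nat.factorial_succ]
  push_cast
  push_cast at habs
  linear_combination (-((b:ℚ)+i+1) * ((b+i)! : ℚ) * ((c+j)! : ℚ)) * habs

lemma base_j0 (b c i : ℕ) : Phi b c i 0 = Rr b c i 0 := by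
  have e : Phi b c i 0 = dff c (i:ℤ) * ((b+c)! : ℚ) := by
    unfold Phi
    rw [Finset.sum_range_one]
    unfold Tt
    simp [dff_zero, ffactZ_nat]
  rw [e]
  unfold Rr
  simp only [Nat.cast_zero, add_zero, Nat.add_zero]
  rcases le_or_gt (i : ℕ) c with hic | hic
  · have e1 : dff c (i:ℤ) = (c.choose i : ℚ) * (i ! : ℚ) := by
      unfold dff; rw [ibinom_nat, ffactZ_nat]
    have e2 : ibinom ((b:ℕ)+c) ((c:ℤ) - i) = ((b+c).choose (c - i) : ℚ) := by
      rw [show (c:ℤ) - i = ((c - i : ℕ) : ℤ) by omega]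
      exact_mod_cast ibinom_nat (b+c) (c-i)
    rw [e1, e2]
    rw [Nat.cast_choose ℚ hic, Nat.cast_choose ℚ (show c - i ≤ b + c by omega)]
    rw [show b + c - (c - i) = b + i by omega]
    have f1 : ((c-i)! : ℚ) ≠ 0 := by exact_mod_cast Nat.factorial_ne_zero _
    have f2 : ((i)! : ℚ) ≠ 0 := by exact_mod_cast Nat.factorial_ne_zero _
    have f3 : (((b+i))! : ℚ) ≠ 0 := by exact_mod_cast Nat.factorial_ne_zero _
    field_simp
  · rw [dff_of_gt (by omega), ibinom_of_neg (by push_cast; omega)]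
    ring

lemma base_diag00 (i : ℕ) : Phi 0 0 i i = Rr 0 0 i i := by
  have e : Phi 0 0 i i = Tt 0 0 i i i := by
    unfold Phi
    refine Finset.sum_eq_single_of_mem i (Finset.self_mem_range_succ i) (fun k hk hki => ?_)
    have hk' : k < i ∨ i < k := by omega
    rcases hk' with h | h
    · unfold Tt
      simp only [Nat.cast_zero]
      rw [dff_of_gt (by omega : (0:ℤ) < (i:ℤ) - k)]
      ring
    · exact Tt_zero_left h
  rw [e]
  unfold Tt Rr
  simp only [Nat.cast_zero, add_zero, Nat.add_zero, Nat.zero_add, zero_add]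
  rw [show (i:ℤ) - i = 0 by ring]
  rw [dff_zero (by norm_num), ibinom_zero (by norm_num)]
  simp

theorem Phi_eq_R (b c i j : ℕ) : Phi b c i j = Rr b c i j := by
  suffices H : ∀ n b c i j, i + j = n → Phi b c i j = Rr b c i j from H (i+j) b c i j rfl
  intro n
  induction n using Nat.strong_induction_on with
  | _ n IH =>
    intro b c i j hn
    rcases j with _ | j
    · exact base_j0 b c i
    · by_cases hdeg : i = c + j + 1
      · by_cases hbc : b + c = 0
        · have hb : b = 0 := by omega
          have hc : c = 0 := by omega
          subst hb; subst hc
          have hi : i = j + 1 := by omega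
          subst hi
          exact base_diag00 (j+1)
        · obtain ⟨i', rfl⟩ : ∃ i', i = i' + 1 := ⟨c + j, by omega⟩
          have hIH : Phi b c i' (j+1) = Rr b c i' (j+1) :=
            IH (i' + (j+1)) (by omega) b c i' (j+1) rfl
          have h1 := recI b c i' (j+1)
          have h2 := recI_R b c i' (j+1)
          have hco : ((b:ℚ) + i' + 1 - (j+1:ℕ)) ≠ 0 := by
            have hi' : i' = c + j := by omega
            subst hi'
            push_cast
            have : (0:ℚ) < (b:ℚ) + c := by
              have : 0 < b + c := by omega
              exact_mod_cast this
            intro hcon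
            nlinarith [this]
          apply mul_left_cancel₀ hco
          rw [h1, hIH, h2]
      · have hIH : Phi b c i j = Rr b c i j := IH (i + j) (by omega) b c i j rfl
        have h1 := recJ b c i j
        have h2 := recJ_R b c i j
        have hco : ((c:ℚ) + j + 1 - (i:ℕ)) ≠ 0 := by
          intro hcon
          have : ((c + j + 1 : ℕ) : ℚ) = ((i:ℕ) : ℚ) := by push_cast; linarith [hcon]
          have : c + j + 1 = i := by exact_mod_cast this
          omega
        apply mul_left_cancel₀ hco
        rw [h1, hIH, h2]

section Mat
variable (a b c : ℕ)

def Lm : Matrix (Fin a) (Fin a) ℚ := Matrix.of fun i k =>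
  ((i:ℕ).choose (k:ℕ) : ℚ) * dff c (((i:ℕ):ℤ) - ((k:ℕ):ℤ)) * ((b + k)! : ℚ) / ((b + i)! : ℚ)

def Wm : Matrix (Fin a) (Fin a) ℚ := Matrix.of fun k j =>
  ((j:ℕ).choose (k:ℕ) : ℚ) * dff b (((j:ℕ):ℤ) - ((k:ℕ):ℤ)) * ((k:ℕ)! : ℚ) * ((b + c + k)! : ℚ)
    / (((b + k)! : ℚ) * ((c + j)! : ℚ))

lemma Lm_mul_Wm (i j : Fin a) :
    (Lm a b c * Wm a b c) i j = ibinom ((b:ℤ) + c) ((c:ℤ) + (j:ℕ) - (i:ℕ)) := by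
  rw [Matrix.mul_apply]
  have hterm : ∀ k : Fin a, Lm a b c i k * Wm a b c k j
      = Tt b c i j k * (((b+(i:ℕ))! : ℚ))⁻¹ * (((c+(j:ℕ))! : ℚ))⁻¹ := by
    intro k
    unfold Lm Wm Tt
    simp only [Matrix.of_apply]
    have f1 : ((b + (k:ℕ))! : ℚ) ≠ 0 := by exact_mod_cast Nat.factorial_ne_zero _
    field_simp
  rw [Finset.sum_congr rfl (fun k _ => hterm k)]
  rw [← Finset.sum_mul, ← Finset.sum_mul]
  have hsum : ∑ k : Fin a, Tt b c (i:ℕ) (j:ℕ) (k:ℕ) = Phi b c i j := by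
    rw [Fin.sum_univ_eq_sum_range (fun k => Tt b c (i:ℕ) (j:ℕ) k) a]
    exact (Phi_eq_sum (by omega : (j:ℕ) + 1 ≤ a)).symm
  rw [hsum, Phi_eq_R]
  unfold Rr
  have f2 : ((b+(i:ℕ))! : ℚ) ≠ 0 := by exact_mod_cast Nat.factorial_ne_zero _
  have f3 : ((c+(j:ℕ))! : ℚ) ≠ 0 := by exact_mod_cast Nat.factorial_ne_zero _
  push_cast
  field_simp

lemma Lm_det : (Lm a b c).det = 1 := by
  have h : (Lm a b c).BlockTriangular OrderDual.toDual := by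
    intro i k hik
    have : (i:ℕ) < (k:ℕ) := hik
    unfold Lm
    simp [Matrix.of_apply, Nat.choose_eq_zero_of_lt this]
  rw [Matrix.det_of_lowerTriangular _ h]
  apply Finset.prod_eq_one
  intro i _
  unfold Lm
  simp only [Matrix.of_apply, sub_self, Nat.choose_self, Nat.cast_one]
  rw [dff_zero (by positivity)]
  have f2 : ((b+(i:ℕ))! : ℚ) ≠ 0 := by exact_mod_cast Nat.factorial_ne_zero _
  field_simp

lemma Wm_det : (Wm a b c).det = macmahon a b c := by
  have h : (Wm a b c).BlockTriangular id := by
    intro k j hkj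
    have : (j:ℕ) < (k:ℕ) := hkj
    unfold Wm
    simp [Matrix.of_apply, Nat.choose_eq_zero_of_lt this]
  rw [Matrix.det_of_upperTriangular h]
  unfold macmahon
  rw [← Fin.prod_univ_eq_prod_range
    (fun i => ((i ! : ℚ) * ((b + c + i)! : ℚ)) / (((b + i)! : ℚ) * ((c + i)! : ℚ))) a]
  apply Finset.prod_congr rfl
  intro k _
  unfold Wm
  simp only [Matrix.of_apply, sub_self, Nat.choose_self, Nat.cast_one]
  rw [dff_zero (by positivity)]
  ring

lemma detQ2 :
    (Matrix.of fun i j : Fin a =>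
      ibinom ((b : ℤ) + c) ((c : ℤ) - (((i : ℕ) : ℤ) + 1) + (((j : ℕ) : ℤ) + 1))).det
      = macmahon a b c := by
  have hQ : (Matrix.of fun i j : Fin a =>
      ibinom ((b : ℤ) + c) ((c : ℤ) - (((i : ℕ) : ℤ) + 1) + (((j : ℕ) : ℤ) + 1)))
      = Lm a b c * Wm a b c := by
    ext i j
    rw [Lm_mul_Wm]
    simp only [Matrix.of_apply]
    congr 1
    ring
  rw [hQ, Matrix.det_mul, Lm_det, Wm_det, one_mul]

lemma macmahon_ne_zero : macmahon a b c ≠ 0 := by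
  unfold macmahon
  rw [Finset.prod_ne_zero_iff]
  intro i _
  have f1 : ((i)! : ℚ) > 0 := by exact_mod_cast Nat.factorial_pos _
  have f2 : (((b+c+i))! : ℚ) > 0 := by exact_mod_cast Nat.factorial_pos _
  have f3 : (((b+i))! : ℚ) > 0 := by exact_mod_cast Nat.factorial_pos _
  have f4 : (((c+i))! : ℚ) > 0 := by exact_mod_cast Nat.factorial_pos _
  positivity

end Mat

end AuxMacMahon

/-- Schur-complement evaluation: `E(a,b,c,d,p) = det F · M(a,b,c)` with
`F = Q₄ − Q₃·Q₂⁻¹·Q₁`. -/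
theorem E_schur_complement (a b c d : ℕ) (p : ℤ) :
    let Q2 : Matrix (Fin a) (Fin a) ℚ := Matrix.of fun i j =>
      ibinom ((b : ℤ) + c) ((c : ℤ) - (((i : ℕ) : ℤ) + 1) + (((j : ℕ) : ℤ) + 1))
    let Q1 : Matrix (Fin a) (Fin d) ℚ := Matrix.of fun i j =>
      ibinom (2 * (((j : ℕ) : ℤ) + 1) - 1) ((((j : ℕ) : ℤ) + 1) - (((i : ℕ) : ℤ) + 1) + p)
    let Q3 : Matrix (Fin d) (Fin a) ℚ := Matrix.of fun i j =>
      ibinom ((b : ℤ) + c - 2 * (((i : ℕ) : ℤ) + 1) + 1)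
        ((c : ℤ) - (((i : ℕ) : ℤ) + 1) + (((j : ℕ) : ℤ) + 1) - p)
    let Q4 : Matrix (Fin d) (Fin d) ℚ := Matrix.of fun i j =>
      ibinom (2 * (((j : ℕ) : ℤ) - ((i : ℕ) : ℤ))) (((j : ℕ) : ℤ) - ((i : ℕ) : ℤ))
    IsUnit Q2.det ∧
      E a b c d p = (Q4 - Q3 * Q2⁻¹ * Q1).det * macmahon a b c := by
  intro Q2 Q1 Q3 Q4
  have hdet : Q2.det = macmahon a b c := detQ2 a b c
  have hU : IsUnit Q2.det := by
    rw [hdet]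
    exact isUnit_iff_ne_zero.2 (macmahon_ne_zero a b c)
  refine ⟨hU, ?_⟩
  haveI : Invertible Q2 := Q2.invertibleOfIsUnitDet hU
  have hsub : (Qmat a b c d p).submatrix finSumFinEquiv finSumFinEquiv
      = Matrix.fromBlocks Q2 Q1 Q3 Q4 := by
    ext i j
    rcases i with i | i <;> rcases j with j | j <;>
      simp only [Matrix.submatrix_apply, finSumFinEquiv_apply_left, finSumFinEquiv_apply_right,
        Matrix.fromBlocks_apply₁₁, Matrix.fromBlocks_apply₁₂,
        Matrix.fromBlocks_apply₂₁, Matrix.fromBlocks_apply₂₂, Qmat, Matrix.of_apply,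
        Fin.coe_castAdd, Fin.coe_natAdd]
    · rw [if_pos i.isLt, if_pos j.isLt]
      show _ = Q2 i j
      simp only [Q2, Matrix.of_apply]
    · rw [if_pos i.isLt, if_neg (by omega)]
      show _ = Q1 i j
      simp only [Q1, Matrix.of_apply]
      congr 1 <;> push_cast <;> ring
    · rw [if_neg (by omega), if_pos j.isLt]
      show _ = Q3 i j
      simp only [Q3, Matrix.of_apply]
      congr 1 <;> push_cast <;> ring
    · rw [if_neg (by omega), if_neg (by omega)]
      show _ = Q4 i j
      simp only [Q4, Matrix.of_apply]
      congr 1 <;> push_cast <;> ring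
  have hE : E a b c d p = (Matrix.fromBlocks Q2 Q1 Q3 Q4).det := by
    rw [← hsub, Matrix.det_submatrix_equiv_self]
    rfl
  rw [hE, Matrix.det_fromBlocks₁₁, hdet, Matrix.invOf_eq_nonsing_inv, mul_comm]
end
end

section
/- Let a, b, c be positive integers with b ≥ 2 and c ≥ 2. Then b! · ∑_{t=0}^{a−1} (−1)^t · (b−t)_{c+t} · ∑_{k=t}^{a−1} (b)_{k−t} · C(k, t) · C(c+k−1, k) / (b+c+k)! = 1 − (c)_a / (b+c)_a, where the sums are over the rationals, (x)_n denotes the Pochhammer symbol (rising factorial) evaluated at the (possibly negative) integer argument b−t, and C(n,k) is the binomial coefficient (equal to 0 for k < 0 or k > n). -/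
open Finset

noncomputable section

lemma poch_zero (x : ℚ) : poch x 0 = 1 := by simp [poch]
lemma poch_succ (x : ℚ) (n : ℕ) : poch x (n+1) = poch x n * (x + n) :=
  ascPochhammer_succ_eval n x
lemma poch_succ_left (x : ℚ) (n : ℕ) : poch x (n+1) = x * poch (x+1) n := by
  simp [poch, ascPochhammer_succ_left, Polynomial.eval_comp]
lemma poch_add (x : ℚ) (m n : ℕ) : poch x (m + n) = poch x m * poch (x + m) n := by
  have := congrArg (Polynomial.eval x) (ascPochhammer_mul ℚ m n)
  simpa [poch, Polynomial.eval_comp] using this.symm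
lemma poch_nat_fac (n m : ℕ) : poch ((n:ℚ)+1) m * (Nat.factorial n : ℚ) = (Nat.factorial (n+m) : ℚ) := by
  have := factorial_mul_ascPochhammer ℚ n m
  rw [poch, mul_comm]
  exact_mod_cast this
lemma poch_one (n : ℕ) : poch 1 n = (Nat.factorial n : ℚ) := by
  have := poch_nat_fac 0 n
  simpa using this
lemma poch_reflect : ∀ (n : ℕ) (x : ℚ), poch (x - n) n = (-1)^n * poch (1 - x) n := by
  intro n
  induction n with
  | zero => intro x; simp [poch_zero]
  | succ n ih =>
    intro x
    rw [poch_succ_left, poch_succ (1-x) n]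
    have h : x - (n+1:ℕ) + 1 = x - n := by push_cast; ring
    rw [h, ih x]
    push_cast
    ring
lemma poch_vandermonde (n : ℕ) (x y : ℚ) :
    poch (x + y) n =
      ∑ k ∈ Finset.range (n+1), (Nat.choose n k : ℚ) * poch x k * poch y (n - k) := by
  induction n with
  | zero => simp [poch_zero]
  | succ n ih =>
    rw [poch_succ, ih, Finset.sum_mul]
    have hterm : ∀ k ∈ Finset.range (n+1),
        (Nat.choose n k : ℚ) * poch x k * poch y (n - k) * (x + y + n)
          = (Nat.choose n k : ℚ) * (poch x (k+1) * poch y (n - k))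
            + (Nat.choose n k : ℚ) * (poch x k * poch y (n + 1 - k)) := by
      intro k hk
      rw [Finset.mem_range] at hk
      have hk' : k ≤ n := Nat.lt_succ_iff.mp hk
      have h1 : poch x (k+1) = poch x k * (x + k) := poch_succ x k
      have h2 : poch y (n + 1 - k) = poch y (n - k) * (y + (n - k : ℕ)) := by
        have : n + 1 - k = (n - k) + 1 := by omega
        rw [this, poch_succ]
      have hc : ((n - k : ℕ) : ℚ) = (n : ℚ) - k := by
        push_cast [hk']; ring
      rw [h1, h2, hc]
      ring
    rw [Finset.sum_congr rfl hterm, Finset.sum_add_distrib]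
    -- S1 + S2 = target
    have hS2 : ∑ k ∈ Finset.range (n+1), (Nat.choose n k : ℚ) * (poch x k * poch y (n + 1 - k))
        = ∑ j ∈ Finset.range n, (Nat.choose n (j+1) : ℚ) * (poch x (j+1) * poch y (n - j))
          + poch y (n+1) := by
      rw [Finset.sum_range_succ']
      simp only [Nat.choose_zero_right, Nat.cast_one, one_mul, poch_zero, mul_one, Nat.sub_zero]
      congr 1
      apply Finset.sum_congr rfl
      intro j hj
      have : n + 1 - (j+1) = n - j := by omega
      rw [this]
    rw [hS2]
    rw [Finset.sum_range_succ' (fun j => (Nat.choose (n+1) j : ℚ) * poch x j * poch y (n + 1 - j))]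
    simp only [Nat.choose_zero_right, Nat.cast_one, one_mul, poch_zero, Nat.sub_zero]
    have hsplit : ∀ j ∈ Finset.range (n+1),
        (Nat.choose (n+1) (j+1) : ℚ) * poch x (j+1) * poch y (n + 1 - (j+1))
          = (Nat.choose n j : ℚ) * (poch x (j+1) * poch y (n - j))
            + (Nat.choose n (j+1) : ℚ) * (poch x (j+1) * poch y (n - j)) := by
      intro j hj
      have : n + 1 - (j+1) = n - j := by omega
      rw [this, Nat.choose_succ_succ n j]
      push_cast
      ring
    rw [Finset.sum_congr rfl hsplit, Finset.sum_add_distrib]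
    have hlast : ∑ j ∈ Finset.range (n+1), (Nat.choose n (j+1) : ℚ) * (poch x (j+1) * poch y (n - j))
        = ∑ j ∈ Finset.range n, (Nat.choose n (j+1) : ℚ) * (poch x (j+1) * poch y (n - j)) := by
      rw [Finset.sum_range_succ]
      simp
    rw [hlast]
    ring

lemma fac_ne (n : ℕ) : (Nat.factorial n : ℚ) ≠ 0 :=
  Nat.cast_ne_zero.mpr (Nat.factorial_ne_zero n)

lemma key_sum (a c : ℕ) (x : ℚ) :
    ∑ t ∈ Finset.range (a+1),
        (-1:ℚ)^t * poch (x - t) (c + t) * (poch x (a - t) * (Nat.choose a t : ℚ))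
      = (Nat.factorial a : ℚ) * poch x c := by
  have hterm : ∀ t ∈ Finset.range (a+1),
      (-1:ℚ)^t * poch (x - t) (c + t) * (poch x (a - t) * (Nat.choose a t : ℚ))
        = poch x c * ((Nat.choose a t : ℚ) * poch (1-x) t * poch x (a - t)) := by
    intro t ht
    have h1 : poch (x - t) (c + t) = poch (x - t) t * poch x c := by
      rw [add_comm c t, poch_add]
      have hx : x - (t:ℚ) + t = x := by ring
      rw [hx]
    have h2 : poch (x - t) t = (-1)^t * poch (1 - x) t := poch_reflect t x
    have h3 : (-1:ℚ)^t * (-1)^t = 1 := by rw [← mul_pow]; norm_num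
    rw [h1, h2]
    linear_combination (poch (1-x) t * poch x c * poch x (a-t) * (Nat.choose a t : ℚ)) * h3
  rw [Finset.sum_congr rfl hterm, ← Finset.mul_sum]
  have hv : ∑ t ∈ Finset.range (a+1), (Nat.choose a t : ℚ) * poch (1-x) t * poch x (a - t)
      = (Nat.factorial a : ℚ) := by
    rw [← poch_vandermonde]
    have : (1 - x) + x = 1 := by ring
    rw [this, poch_one]
  rw [hv]; ring

lemma sum_step (a : ℕ) (F : ℕ → ℚ) (G : ℕ → ℕ → ℚ) :
    ∑ t ∈ Finset.range (a+1), F t * ∑ k ∈ Finset.Ico t (a+1), G t k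
      = (∑ t ∈ Finset.range a, F t * ∑ k ∈ Finset.Ico t a, G t k)
        + ∑ t ∈ Finset.range (a+1), F t * G t a := by
  rw [Finset.sum_range_succ (fun t => F t * ∑ k ∈ Finset.Ico t (a+1), G t k)]
  rw [Finset.sum_range_succ (fun t => F t * G t a)]
  have h1 : ∀ t ∈ Finset.range a,
      F t * ∑ k ∈ Finset.Ico t (a+1), G t k
        = F t * ∑ k ∈ Finset.Ico t a, G t k + F t * G t a := by
    intro t ht
    rw [Finset.sum_Ico_succ_top (Nat.le_of_lt (Finset.mem_range.mp ht)), mul_add]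
  rw [Finset.sum_congr rfl h1, Finset.sum_add_distrib]
  have h2 : ∑ k ∈ Finset.Ico a (a+1), G a k = G a a := by
    rw [Finset.sum_Ico_succ_top le_rfl]
    simp
  rw [h2]
  ring

lemma step_numeric (a b c : ℕ) (hb : 1 ≤ b) (hc : 1 ≤ c) :
    (Nat.factorial b : ℚ) *
        ((Nat.factorial a : ℚ) * poch (b:ℚ) c *
          ((Nat.choose (c+a-1) a : ℚ) / (Nat.factorial (b+c+a) : ℚ)))
      = poch (c:ℚ) a / poch ((b:ℚ)+c) a - poch (c:ℚ) (a+1) / poch ((b:ℚ)+c) (a+1) := by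
  obtain ⟨B, rfl⟩ : ∃ B, b = B + 1 := ⟨b - 1, by omega⟩
  obtain ⟨C, rfl⟩ : ∃ C, c = C + 1 := ⟨c - 1, by omega⟩
  have cb : ((B+1:ℕ):ℚ) = (B:ℚ)+1 := by push_cast; ring
  have cc : ((C+1:ℕ):ℚ) = (C:ℚ)+1 := by push_cast; ring
  have e1 : C+1+a-1 = C+a := by omega
  have e2 : B+1+(C+1)+a = B+C+a+2 := by omega
  rw [cb, cc, e1, e2]
  have cbc : (B:ℚ)+1+((C:ℚ)+1) = (B:ℚ)+C+2 := by ring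
  rw [cbc]
  -- express pochs and choose as factorial quotients
  have p1 : poch ((B:ℚ)+1) (C+1) = (Nat.factorial (B+C+1) : ℚ) / (Nat.factorial B : ℚ) := by
    rw [eq_div_iff (fac_ne B)]
    have := poch_nat_fac B (C+1)
    have e : B+(C+1) = B+C+1 := by omega
    rwa [e] at this
  have p2 : poch ((C:ℚ)+1) a = (Nat.factorial (C+a) : ℚ) / (Nat.factorial C : ℚ) := by
    rw [eq_div_iff (fac_ne C)]
    exact poch_nat_fac C a
  have p2' : poch ((C:ℚ)+1) (a+1) = (Nat.factorial (C+a+1) : ℚ) / (Nat.factorial C : ℚ) := by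
    rw [eq_div_iff (fac_ne C)]
    have := poch_nat_fac C (a+1)
    have e : C+(a+1) = C+a+1 := by omega
    rwa [e] at this
  have p3 : poch ((B:ℚ)+C+2) a = (Nat.factorial (B+C+a+1) : ℚ) / (Nat.factorial (B+C+1) : ℚ) := by
    rw [eq_div_iff (fac_ne (B+C+1))]
    have h := poch_nat_fac (B+C+1) a
    have e : ((B+C+1:ℕ):ℚ) + 1 = (B:ℚ)+C+2 := by push_cast; ring
    have e2' : B+C+1+a = B+C+a+1 := by omega
    rw [e, e2'] at h
    exact h
  have p3' : poch ((B:ℚ)+C+2) (a+1) = (Nat.factorial (B+C+a+2) : ℚ) / (Nat.factorial (B+C+1) : ℚ) := by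
    rw [eq_div_iff (fac_ne (B+C+1))]
    have h := poch_nat_fac (B+C+1) (a+1)
    have e : ((B+C+1:ℕ):ℚ) + 1 = (B:ℚ)+C+2 := by push_cast; ring
    have e2' : B+C+1+(a+1) = B+C+a+2 := by omega
    rw [e, e2'] at h
    exact h
  have p4 : ((C+a).choose a : ℚ) = (Nat.factorial (C+a) : ℚ) / ((Nat.factorial a : ℚ) * (Nat.factorial C : ℚ)) := by
    rw [eq_div_iff (mul_ne_zero (fac_ne a) (fac_ne C))]
    have h := Nat.choose_mul_factorial_mul_factorial (Nat.le_add_left a C)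
    have e : C + a - a = C := by omega
    rw [e] at h
    push_cast [← h]
    ring
  have hfa : (Nat.factorial (B+C+a+2) : ℚ) = ((B:ℚ)+C+a+2) * (Nat.factorial (B+C+a+1) : ℚ) := by
    have e : B+C+a+2 = (B+C+a+1)+1 := by omega
    rw [e, Nat.factorial_succ]
    push_cast; ring
  have hfb : (Nat.factorial (B+1) : ℚ) = ((B:ℚ)+1) * (Nat.factorial B : ℚ) := by
    rw [Nat.factorial_succ]; push_cast; ring
  have hfc : (Nat.factorial (C+a+1) : ℚ) = ((C:ℚ)+a+1) * (Nat.factorial (C+a) : ℚ) := by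
    rw [Nat.factorial_succ]; push_cast; ring
  rw [p1, p2, p2', p3, p3', p4, hfa, hfb, hfc]
  have h1 : ((B:ℚ)+C+a+2) ≠ 0 := by positivity
  field_simp
  ring

theorem sum_formula_p_zero' (a b c : ℕ) (hb : 2 ≤ b) (hc : 2 ≤ c) :
    (Nat.factorial b : ℚ) *
        ∑ t ∈ Finset.range a,
          (-1 : ℚ) ^ t * poch ((b : ℚ) - t) (c + t) *
            ∑ k ∈ Finset.Ico t a,
              poch (b : ℚ) (k - t) * (Nat.choose k t : ℚ) * (Nat.choose (c + k - 1) k : ℚ) /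
                (Nat.factorial (b + c + k) : ℚ) =
      1 - poch (c : ℚ) a / poch ((b : ℚ) + c) a := by
  induction a with
  | zero => simp [poch_zero]
  | succ a ih =>
    have hsplit := sum_step a
      (fun t => (-1:ℚ)^t * poch ((b:ℚ) - t) (c+t))
      (fun t k => poch (b:ℚ) (k-t) * (Nat.choose k t : ℚ) * (Nat.choose (c+k-1) k : ℚ) /
        (Nat.factorial (b+c+k) : ℚ))
    rw [hsplit, mul_add, ih]
    have hD : (Nat.factorial b : ℚ) *
        ∑ t ∈ Finset.range (a+1),
          (-1:ℚ)^t * poch ((b:ℚ) - t) (c+t) *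
            (poch (b:ℚ) (a-t) * (Nat.choose a t : ℚ) * (Nat.choose (c+a-1) a : ℚ) /
              (Nat.factorial (b+c+a) : ℚ))
        = poch (c:ℚ) a / poch ((b:ℚ)+c) a - poch (c:ℚ) (a+1) / poch ((b:ℚ)+c) (a+1) := by
      have hterm : ∀ t ∈ Finset.range (a+1),
          (-1:ℚ)^t * poch ((b:ℚ) - t) (c+t) *
            (poch (b:ℚ) (a-t) * (Nat.choose a t : ℚ) * (Nat.choose (c+a-1) a : ℚ) /
              (Nat.factorial (b+c+a) : ℚ))
          = ((-1:ℚ)^t * poch ((b:ℚ) - t) (c+t) * (poch (b:ℚ) (a-t) * (Nat.choose a t : ℚ)))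
            * ((Nat.choose (c+a-1) a : ℚ) / (Nat.factorial (b+c+a) : ℚ)) := by
        intro t _; ring
      rw [Finset.sum_congr rfl hterm, ← Finset.sum_mul, key_sum a c (b:ℚ)]
      have hnum := step_numeric a b c (by omega) (by omega)
      linear_combination hnum
    linarith [hD]

/-- The `p = 0` case of the summation identity obtained from the Schur-complement
evaluation of `E(a,b,c,1,p)`. -/
theorem sum_formula_p_zero (a b c : ℕ) (ha : 0 < a) (hb : 2 ≤ b) (hc : 2 ≤ c) :
    (Nat.factorial b : ℚ) *
        ∑ t ∈ Finset.range a,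
          (-1 : ℚ) ^ t * poch ((b : ℚ) - t) (c + t) *
            ∑ k ∈ Finset.Ico t a,
              poch (b : ℚ) (k - t) * (Nat.choose k t : ℚ) * (Nat.choose (c + k - 1) k : ℚ) /
                (Nat.factorial (b + c + k) : ℚ) =
      1 - poch (c : ℚ) a / poch ((b : ℚ) + c) a := by
  exact sum_formula_p_zero' a b c hb hc
end
end
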